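/- Let |ψ⟩ be a pure n-qubit state whose stabilizer group has cardinality 2^{n−ν}, and let V be a unitary acting on a subset of l of the n qubits (extended by the identity on the remaining qubits). Then the stabilizer group of the state V|ψ⟩ has cardinality at least 2^{n−ν−2l}. In particular, a state prepared from |0⟩^{⊗n} by Clifford gates together with t non-Clifford gates each acting on at most l qubits has stabilizer nullity at most 2lt. -/

import Mathlib

open scoped Matrix ComplexOrder ENNReal Classical

noncomputable section

abbrev QVec (n : ℕ) := (Fin n → Fin 2) → ℂ
abbrev QMat (n : ℕ) := Matrix (Fin n → Fin 2) (Fin n → Fin 2) ℂ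

/-- `ψ` is a unit vector (a pure state). -/
def IsUnitVec {n : ℕ} (ψ : QVec n) : Prop := ∑ x, Complex.normSq (ψ x) = 1

/-- The ℓ² norm of a vector. -/
def vnorm {n : ℕ} (v : QVec n) : ℝ := Real.sqrt (∑ x, Complex.normSq (v x))

/-- The density matrix `|ψ⟩⟨ψ|`. -/
def dm {n : ℕ} (ψ : QVec n) : QMat n := Matrix.vecMulVec ψ (star ψ)

/-- The four single-qubit Pauli matrices I, X, Y, Z. -/
def pauli1 : Fin 4 → Matrix (Fin 2) (Fin 2) ℂ :=
  ![1, !![0, 1; 1, 0], !![0, -Complex.I; Complex.I, 0], !![1, 0; 0, -1]]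

/-- The `n`-qubit Pauli operator `P₁ ⊗ ⋯ ⊗ P_n` given by a string `p`. -/
def pauliOp {n : ℕ} (p : Fin n → Fin 4) : QMat n :=
  fun x y => ∏ j, pauli1 (p j) (x j) (y j)

/-- The `n`-qubit Pauli group: matrices `i^a · P₁ ⊗ ⋯ ⊗ P_n`. -/
def PauliGroup (n : ℕ) : Set (QMat n) :=
  {M | ∃ (a : Fin 4) (p : Fin n → Fin 4), M = Complex.I ^ (a : ℕ) • pauliOp p}

/-- A Hermitian Pauli operator: `± P₁ ⊗ ⋯ ⊗ P_n`. -/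
def IsHermPauli {n : ℕ} (M : QMat n) : Prop :=
  ∃ (s : ℂ) (p : Fin n → Fin 4), (s = 1 ∨ s = -1) ∧ M = s • pauliOp p

/-- The stabilizer group `G = {P ∈ 𝒫_n : P|ψ⟩ = |ψ⟩}` of a pure state. -/
def stabGroup {n : ℕ} (ψ : QVec n) : Set (QMat n) :=
  {P | P ∈ PauliGroup n ∧ P.mulVec ψ = ψ}

/-- `M` is supported on the qubits in `A` (acts as the identity on the rest),
i.e. `M = f_A ⊗ 𝟙` for some matrix `f` on the `A` qubits. -/
def MatSupportedOn {n : ℕ} (A : Finset (Fin n)) (M : QMat n) : Prop :=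
  ∃ f : ({j // j ∈ A} → Fin 2) → ({j // j ∈ A} → Fin 2) → ℂ,
    ∀ x y, M x y =
      if ∀ j ∉ A, x j = y j then f (fun j => x j.1) (fun j => y j.1) else 0

/-- The local stabilizer subgroup `G_A`: stabilizers acting as the identity outside `A`. -/
def localStab {n : ℕ} (ψ : QVec n) (A : Finset (Fin n)) : Set (QMat n) :=
  {P | P ∈ stabGroup ψ ∧ MatSupportedOn A P}

/-- `log₂` of the cardinality of a set. -/
def logCard {α : Type*} (S : Set α) : ℝ := Real.logb 2 S.ncard

/-- The stabilizer entanglement `ℰ(ψ; A|B) = (|S| − |S_A| − |S_B|)/2` (with `B = Aᶜ`). -/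
def stabEnt {n : ℕ} (ψ : QVec n) (A : Finset (Fin n)) : ℝ :=
  (logCard (stabGroup ψ) - logCard (localStab ψ A) - logCard (localStab ψ Aᶜ)) / 2

/-- Combine an assignment on `A` and on `Aᶜ` into one on all qubits. -/
def mergeFn {n : ℕ} (A : Finset (Fin n)) (x : {j // j ∈ A} → Fin 2)
    (z : {j // j ∈ Aᶜ} → Fin 2) : Fin n → Fin 2 :=
  fun j => if h : j ∈ A then x ⟨j, h⟩ else z ⟨j, Finset.mem_compl.mpr h⟩

/-- The reduced density matrix `ψ_A = Tr_{Aᶜ} |ψ⟩⟨ψ|`. -/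
def reducedDM {n : ℕ} (A : Finset (Fin n)) (ψ : QVec n) :
    Matrix ({j // j ∈ A} → Fin 2) ({j // j ∈ A} → Fin 2) ℂ :=
  fun x y => ∑ z : {j // j ∈ Aᶜ} → Fin 2, ψ (mergeFn A x z) * star (ψ (mergeFn A y z))

/-- The α-Rényi entropy (base 2) of a Hermitian matrix, defined through its eigenvalues:
`S₀ = log₂ rank`, `S₁` the von Neumann entropy, `S_∞ = −log₂` (largest eigenvalue, which is
the operator norm for positive semidefinite matrices), and
`S_α = (1−α)⁻¹ log₂ Σ λ_i^α` otherwise. -/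
def renyi {m : Type*} [Fintype m] [DecidableEq m] (α : ℝ≥0∞)
    (ρ : Matrix m m ℂ) : ℝ :=
  if h : ρ.IsHermitian then
    if α = 0 then Real.logb 2 (ρ.rank : ℝ)
    else if α = 1 then -∑ i, h.eigenvalues i * Real.logb 2 (h.eigenvalues i)
    else if α = ⊤ then -Real.logb 2 (⨆ i, h.eigenvalues i)
    else (1 / (1 - α.toReal)) * Real.logb 2 (∑ i, h.eigenvalues i ^ α.toReal)
  else 0

def IsUnitary {n : ℕ} (U : QMat n) : Prop := U * Uᴴ = 1 ∧ Uᴴ * U = 1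

/-- A Clifford unitary: a unitary whose conjugation action maps the Pauli group onto itself. -/
def IsClifford {n : ℕ} (U : QMat n) : Prop :=
  IsUnitary U ∧ (fun P => U * P * Uᴴ) '' PauliGroup n = PauliGroup n

/-- Amplitudes of the Bell pair `|φ₊⟩ = (|00⟩+|11⟩)/√2`. -/
def bellAmp (a b : Fin 2) : ℂ := if a = b then ((Real.sqrt 2 : ℝ) : ℂ)⁻¹ else 0

/-- Trace out the last `m` qubits of a pure state on `n + m` qubits. -/
def traceOutLast {n m : ℕ} (Ψ : QVec (n + m)) : QMat n :=
  fun x y => ∑ z : Fin m → Fin 2,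
    Ψ (Fin.append x z) * star (Ψ (Fin.append y z))

/-- `Tr √ρ` for a positive semidefinite matrix (junk value `0` otherwise). -/
def sqrtTrace {m : Type*} [Fintype m] [DecidableEq m] (ρ : Matrix m m ℂ) : ℝ :=
  if h : ρ.PosSemidef then
    (h.1.eigenvectorUnitary.1 * Matrix.diagonal (fun i => ((Real.sqrt (h.1.eigenvalues i) : ℝ) : ℂ)) *
      (star h.1.eigenvectorUnitary : Matrix m m ℂ)).trace.re else 0

/-- `S_{1/2}(ψ_A) = 2 log₂ Tr √ψ_A`. -/
def sHalf {n : ℕ} (A : Finset (Fin n)) (ψ : QVec n) : ℝ :=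
  2 * Real.logb 2 (sqrtTrace (reducedDM A ψ))

/-- The set `SEP^{(E)}(A;B)`: convex hull of pure states with `S_{1/2}` entanglement ≤ E. -/
def SEPE {n : ℕ} (A : Finset (Fin n)) (E : ℝ) : Set (QMat n) :=
  convexHull ℝ {ρ | ∃ ψ : QVec n, IsUnitVec ψ ∧ sHalf A ψ ≤ E ∧ ρ = dm ψ}

/-- `ψ` is a product state across the bipartition `A | Aᶜ`. -/
def IsProdAcross {n : ℕ} (A : Finset (Fin n)) (ψ : QVec n) : Prop :=
  ∃ (f : ({j // j ∈ A} → Fin 2) → ℂ) (g : ({j // j ∈ Aᶜ} → Fin 2) → ℂ),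
    ∀ x, ψ x = f (fun j => x j.1) * g (fun j => x j.1)

/-- The separable states across `A | Aᶜ`. -/
def SEPset {n : ℕ} (A : Finset (Fin n)) : Set (QMat n) :=
  convexHull ℝ {ρ | ∃ ψ : QVec n, IsUnitVec ψ ∧ IsProdAcross A ψ ∧ ρ = dm ψ}

/-- The trace norm `‖X‖₁ = Tr √(XᴴX)` (sum of singular values). -/
def traceNorm {m : Type*} [Fintype m] [DecidableEq m] (X : Matrix m m ℂ) : ℝ :=
  sqrtTrace (Xᴴ * X)

end

noncomputable section

def pmul : Fin 4 → Fin 4 → Fin 4 :=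
  ![![0,1,2,3], ![1,0,3,2], ![2,3,0,1], ![3,2,1,0]]

def pph : Fin 4 → Fin 4 → Fin 4 :=
  ![![0,0,0,0], ![0,0,1,3], ![0,3,0,1], ![0,1,3,0]]

lemma pauli1_mul (a b : Fin 4) :
    pauli1 a * pauli1 b = (Complex.I ^ ((pph a b : ℕ))) • pauli1 (pmul a b) := by
  fin_cases a <;> fin_cases b <;>
    · ext i j
      fin_cases i <;> fin_cases j <;>
        simp [pauli1, pmul, pph, Matrix.mul_apply, Fin.sum_univ_two, Matrix.one_apply,
          Matrix.vecHead, Matrix.vecTail, show ((3:Fin 4):ℕ) = 3 from rfl,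
          show ((1:Fin 4):ℕ) = 1 from rfl, show ((2:Fin 4):ℕ) = 2 from rfl,
          pow_succ, Complex.I_sq] <;> ring

lemma pmul_self (a : Fin 4) : pmul a a = 0 := by fin_cases a <;> rfl

lemma pph_self (a : Fin 4) : pph a a = 0 := by fin_cases a <;> rfl

lemma pauli1_herm (a : Fin 4) : (pauli1 a)ᴴ = pauli1 a := by
  fin_cases a <;>
    · ext i j
      fin_cases i <;> fin_cases j <;>
        simp [pauli1, Matrix.conjTranspose_apply, Matrix.one_apply]

lemma pauliOp_zero {n : ℕ} : pauliOp (n := n) (fun _ => 0) = 1 := by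
  ext x y
  simp only [pauliOp, pauli1]
  by_cases h : x = y
  · subst h; simp [Matrix.one_apply]
  · obtain ⟨j, hj⟩ := Function.ne_iff.mp h
    rw [Matrix.one_apply_ne h]
    exact Finset.prod_eq_zero (Finset.mem_univ j) (by simp [Matrix.one_apply, hj])

lemma pauliOp_mul {n : ℕ} (p q : Fin n → Fin 4) :
    pauliOp p * pauliOp q =
      (Complex.I ^ (∑ j, ((pph (p j) (q j) : ℕ)))) • pauliOp (fun j => pmul (p j) (q j)) := by
  ext x y
  simp only [Matrix.mul_apply, pauliOp, Matrix.smul_apply, smul_eq_mul]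
  have : ∀ z : Fin n → Fin 2, (∏ j, pauli1 (p j) (x j) (z j)) * ∏ j, pauli1 (q j) (z j) (y j)
      = ∏ j, (pauli1 (p j) (x j) (z j) * pauli1 (q j) (z j) (y j)) := by
    intro z; rw [Finset.prod_mul_distrib]
  simp_rw [this]
  rw [show (Finset.univ : Finset (Fin n → Fin 2)) = Fintype.piFinset (fun _ => Finset.univ) by
    ext; simp]
  rw [← Finset.prod_univ_sum (fun _ => (Finset.univ : Finset (Fin 2)))
    (fun j c => pauli1 (p j) (x j) c * pauli1 (q j) c (y j))]
  have : ∀ j, (∑ c : Fin 2, pauli1 (p j) (x j) c * pauli1 (q j) c (y j))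
      = Complex.I ^ ((pph (p j) (q j) : ℕ)) * pauli1 (pmul (p j) (q j)) (x j) (y j) := by
    intro j
    have := congrFun (congrFun (pauli1_mul (p j) (q j)) (x j)) (y j)
    simpa [Matrix.mul_apply] using this
  simp_rw [this]
  rw [Finset.prod_mul_distrib, Finset.prod_pow_eq_pow_sum]

lemma pauliOp_herm {n : ℕ} (p : Fin n → Fin 4) : (pauliOp p)ᴴ = pauliOp p := by
  ext x y
  simp only [Matrix.conjTranspose_apply, pauliOp]
  rw [star_prod]
  refine Finset.prod_congr rfl fun j _ => ?_
  have := congrFun (congrFun (pauli1_herm (p j)) (x j)) (y j)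
  simpa [Matrix.conjTranspose_apply] using this

lemma pauliOp_mul_self {n : ℕ} (p : Fin n → Fin 4) : pauliOp p * pauliOp p = 1 := by
  rw [pauliOp_mul]
  simp [pph_self, pmul_self, pauliOp_zero]

lemma pauliOp_supported {n : ℕ} (X : Finset (Fin n)) (r : Fin n → Fin 4)
    (hr : ∀ j ∈ X, r j = 0) : MatSupportedOn Xᶜ (pauliOp r) := by
  refine ⟨fun u v => ∏ j : {j // j ∈ Xᶜ}, pauli1 (r j.1) (u j) (v j), fun x y => ?_⟩
  have hsplit : pauliOp r x y =
      (∏ j ∈ X, pauli1 (r j) (x j) (y j)) * ∏ j ∈ Xᶜ, pauli1 (r j) (x j) (y j) := by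
    rw [Finset.prod_mul_prod_compl]; rfl
  have hXfac : ∀ j ∈ X, pauli1 (r j) (x j) (y j) = if x j = y j then 1 else 0 := by
    intro j hj
    rw [hr j hj]
    by_cases h : x j = y j
    · simp [pauli1, h, Matrix.one_apply]
    · simp [pauli1, Matrix.one_apply_ne h, h]
  by_cases hc : ∀ j ∉ Xᶜ, x j = y j
  · have h1 : ∀ j ∈ X, pauli1 (r j) (x j) (y j) = 1 := by
      intro j hj
      rw [hXfac j hj, if_pos (hc j (by simp [hj]))]
    rw [hsplit, Finset.prod_congr rfl h1, Finset.prod_const_one, one_mul, if_pos hc]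
    rw [← Finset.prod_coe_sort]
  · push_neg at hc
    obtain ⟨j, hj, hne⟩ := hc
    rw [if_neg (by push_neg; exact ⟨j, hj, hne⟩), hsplit]
    have : pauli1 (r j) (x j) (y j) = 0 := by
      rw [hXfac j (by simpa using hj), if_neg hne]
    have hz : (∏ j ∈ X, pauli1 (r j) (x j) (y j)) = 0 :=
      Finset.prod_eq_zero (show j ∈ X by simpa using hj) this
    rw [hz, zero_mul]

lemma supported_commute {n : ℕ} {X : Finset (Fin n)} {M N : QMat n}
    (hM : MatSupportedOn X M) (hN : MatSupportedOn Xᶜ N) : M * N = N * M := by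
  obtain ⟨f, hf⟩ := hM
  obtain ⟨g, hg⟩ := hN
  ext x y
  simp only [Matrix.mul_apply, hf, hg]
  set z₀ : Fin n → Fin 2 := fun j => if j ∈ X then y j else x j with hz₀
  set z₁ : Fin n → Fin 2 := fun j => if j ∈ X then x j else y j with hz₁
  rw [Finset.sum_eq_single z₀, Finset.sum_eq_single z₁]
  · have c1 : ∀ j ∉ Xᶜ, x j = z₁ j := by intro j hj; simp [z₁, show j ∈ X by simpa using hj]
    have c2 : ∀ j ∉ X, z₁ j = y j := by intro j hj; simp [z₁, hj]
    have c3 : ∀ j ∉ X, x j = z₀ j := by intro j hj; simp [z₀, hj]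
    have c4 : ∀ j ∉ Xᶜ, z₀ j = y j := by intro j hj; simp [z₀, show j ∈ X by simpa using hj]
    rw [if_pos c1, if_pos c2, if_pos c3, if_pos c4]
    have e1 : (fun j : {j // j ∈ X} => z₀ j.1) = fun j => y j.1 := by
      funext j; simp [z₀, j.2]
    have e2 : (fun j : {j // j ∈ Xᶜ} => z₀ j.1) = fun j => x j.1 := by
      funext j; have := Finset.mem_compl.mp j.2; simp [z₀, this]
    have e3 : (fun j : {j // j ∈ Xᶜ} => z₁ j.1) = fun j => y j.1 := by
      funext j; have := Finset.mem_compl.mp j.2; simp [z₁, this]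
    have e4 : (fun j : {j // j ∈ X} => z₁ j.1) = fun j => x j.1 := by
      funext j; simp [z₁, j.2]
    rw [e1, e2, e3, e4]
    ring
  · intro z _ hz
    by_cases h1 : ∀ j ∉ Xᶜ, x j = z j
    · by_cases h2 : ∀ j ∉ X, z j = y j
      · exfalso; apply hz; funext j
        by_cases hj : j ∈ X
        · simp [z₁, hj, (h1 j (by simpa using hj)).symm]
        · simp [z₁, hj, h2 j hj]
      · rw [if_neg h2, mul_zero]
    · rw [if_neg h1, zero_mul]
  · intro h; exact absurd (Finset.mem_univ z₁) h
  · intro z _ hz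
    by_cases h1 : ∀ j ∉ X, x j = z j
    · by_cases h2 : ∀ j ∉ Xᶜ, z j = y j
      · exfalso; apply hz; funext j
        by_cases hj : j ∈ X
        · simp [z₀, hj, h2 j (by simpa using hj)]
        · simp [z₀, hj, (h1 j hj).symm]
      · rw [if_neg h2, mul_zero]
    · rw [if_neg h1, zero_mul]
  · intro h; exact absurd (Finset.mem_univ z₀) h

lemma I_pow_mod (N : ℕ) : Complex.I ^ N = Complex.I ^ (N % 4) := by
  conv_lhs => rw [← Nat.div_add_mod N 4]
  rw [pow_add, pow_mul]
  norm_num [pow_succ, Complex.I_sq]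

lemma pauliElt_adj_mul {n : ℕ} (a : Fin 4) (q : Fin n → Fin 4) :
    (Complex.I ^ (a : ℕ) • pauliOp q)ᴴ * (Complex.I ^ (a : ℕ) • pauliOp q) = 1 := by
  rw [Matrix.conjTranspose_smul, pauliOp_herm]
  rw [Matrix.smul_mul, Matrix.mul_smul, smul_smul, pauliOp_mul_self]
  have h : (star (Complex.I ^ (a : ℕ)) : ℂ) * Complex.I ^ (a : ℕ) = 1 := by
    rw [star_pow, ← mul_pow]
    norm_num [Complex.star_def, Complex.conj_I, Complex.I_mul_I]
  rw [h, one_smul]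

lemma pauliGroup_finite (n : ℕ) : (PauliGroup n).Finite := by
  apply Set.Finite.subset (Set.finite_range
    (fun ap : Fin 4 × (Fin n → Fin 4) => Complex.I ^ (ap.1 : ℕ) • pauliOp ap.2))
  rintro M ⟨a, p, rfl⟩
  exact ⟨(a, p), rfl⟩

lemma stab_finite {n : ℕ} (ψ : QVec n) : (stabGroup ψ).Finite :=
  (pauliGroup_finite n).subset (fun _ h => h.1)

lemma one_mem_stab {n : ℕ} (ψ : QVec n) : (1 : QMat n) ∈ stabGroup ψ := by
  refine ⟨⟨0, fun _ => 0, ?_⟩, Matrix.one_mulVec ψ⟩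
  simp [pauliOp_zero]

lemma one_le_stab {n : ℕ} (ψ : QVec n) : 1 ≤ (stabGroup ψ).ncard := by
  have := (Set.ncard_pos (stab_finite ψ)).mpr ⟨1, one_mem_stab ψ⟩
  omega

/-- key pointwise lemma -/

lemma mem_stab_shift {n : ℕ} (ψ : QVec n) (V : QMat n) (X : Finset (Fin n))
    (hV : MatSupportedOn X V) (P Q : QMat n)
    (a b : Fin 4) (p q : Fin n → Fin 4)
    (hP : P = Complex.I ^ (a : ℕ) • pauliOp p) (hQ : Q = Complex.I ^ (b : ℕ) • pauliOp q)
    (hPs : P.mulVec ψ = ψ) (hQs : Q.mulVec ψ = ψ)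
    (hagree : ∀ j ∈ X, p j = q j) :
    P * Qᴴ ∈ stabGroup (V.mulVec ψ) := by
  set r : Fin n → Fin 4 := fun j => pmul (p j) (q j) with hr
  set N : ℕ := (a : ℕ) + 3 * (b : ℕ) + ∑ j, ((pph (p j) (q j) : ℕ)) with hN
  have hform : P * Qᴴ = Complex.I ^ N • pauliOp r := by
    rw [hP, hQ, Matrix.conjTranspose_smul, pauliOp_herm]
    rw [Matrix.smul_mul, Matrix.mul_smul, smul_smul, pauliOp_mul]
    rw [smul_smul, hN, hr]
    congr 1
    have hconj : (star (Complex.I ^ (b : ℕ)) : ℂ) = Complex.I ^ (3 * (b : ℕ)) := by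
      rw [star_pow, pow_mul]
      congr 1
      simp [Complex.star_def, Complex.conj_I, pow_succ, Complex.I_sq]
    rw [hconj, pow_add, pow_add]
  have hr0 : ∀ j ∈ X, r j = 0 := by
    intro j hj; rw [hr]; simp only []
    rw [hagree j hj, pmul_self]
  have hsup := pauliOp_supported X r hr0
  have hcomm : V * pauliOp r = pauliOp r * V := supported_commute hV hsup
  have hQadj : Qᴴ.mulVec ψ = ψ := by
    have hu : Qᴴ * Q = 1 := by rw [hQ]; exact pauliElt_adj_mul b q
    calc Qᴴ.mulVec ψ = Qᴴ.mulVec (Q.mulVec ψ) := by rw [hQs]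
    _ = (Qᴴ * Q).mulVec ψ := by rw [Matrix.mulVec_mulVec]
    _ = ψ := by rw [hu, Matrix.one_mulVec]
  have hstab : (P * Qᴴ).mulVec ψ = ψ := by
    rw [← Matrix.mulVec_mulVec, hQadj, hPs]
  constructor
  · refine ⟨⟨N % 4, Nat.mod_lt _ (by norm_num)⟩, r, ?_⟩
    rw [hform, I_pow_mod]
  · have : (P * Qᴴ) * V = V * (P * Qᴴ) := by
      rw [hform, Matrix.smul_mul, Matrix.mul_smul, hcomm]
    calc (P * Qᴴ).mulVec (V.mulVec ψ) = ((P * Qᴴ) * V).mulVec ψ := by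
          rw [Matrix.mulVec_mulVec]
    _ = (V * (P * Qᴴ)).mulVec ψ := by rw [this]
    _ = V.mulVec ((P * Qᴴ).mulVec ψ) := by rw [Matrix.mulVec_mulVec]
    _ = V.mulVec ψ := by rw [hstab]

lemma stab_le_mul {n : ℕ} (ψ : QVec n) (V : QMat n) (X : Finset (Fin n))
    (hV : MatSupportedOn X V) :
    (stabGroup ψ).ncard ≤ 4 ^ X.card * (stabGroup (V.mulVec ψ)).ncard := by
  classical
  set S := stabGroup ψ
  set S' := stabGroup (V.mulVec ψ)
  have hfin : S.Finite := stab_finite ψ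
  have hfin' : S'.Finite := stab_finite _
  -- decomposition functions
  let sc : QMat n → ℕ := fun P => if h : P ∈ PauliGroup n then (h.choose : ℕ) else 0
  let pstr : QMat n → (Fin n → Fin 4) := fun P =>
    if h : P ∈ PauliGroup n then h.choose_spec.choose else fun _ => 0
  have hrep : ∀ P ∈ PauliGroup n, P = Complex.I ^ (sc P) • pauliOp (pstr P) := by
    intro P hP
    simp only [sc, pstr, dif_pos hP]
    exact hP.choose_spec.choose_spec
  let Φ : QMat n → ({j // j ∈ X} → Fin 4) := fun P j => pstr P j.1
  let rep : ({j // j ∈ X} → Fin 4) → QMat n := fun v =>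
    if h : ∃ Q ∈ S, Φ Q = v then h.choose else 1
  have hrepS : ∀ v, (∃ Q ∈ S, Φ Q = v) → rep v ∈ S ∧ Φ (rep v) = v := by
    intro v h
    simp only [rep, dif_pos h]
    exact ⟨h.choose_spec.1, h.choose_spec.2⟩
  -- the injection
  have hmap : ∀ P ∈ S, P * (rep (Φ P))ᴴ ∈ S' := by
    intro P hP
    have hfib : ∃ Q ∈ S, Φ Q = Φ P := ⟨P, hP, rfl⟩
    obtain ⟨hQS, hQΦ⟩ := hrepS _ hfib
    set Q := rep (Φ P)
    have hagree : ∀ j ∈ X, pstr P j = pstr Q j := by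
      intro j hj
      have := congrFun hQΦ ⟨j, hj⟩
      exact this.symm
    refine mem_stab_shift ψ V X hV P Q ⟨sc P % 4, Nat.mod_lt _ (by norm_num)⟩
      ⟨sc Q % 4, Nat.mod_lt _ (by norm_num)⟩ (pstr P) (pstr Q) ?_ ?_ hP.2 hQS.2 hagree
    · rw [← I_pow_mod]; exact hrep P hP.1
    · rw [← I_pow_mod]; exact hrep Q hQS.1
  have hinj : Set.InjOn (fun P => (Φ P, P * (rep (Φ P))ᴴ)) S := by
    intro P hP P' hP' heq
    have h1 : Φ P = Φ P' := (Prod.mk.injEq _ _ _ _ ▸ heq).1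
    have h2 : P * (rep (Φ P))ᴴ = P' * (rep (Φ P'))ᴴ := (Prod.mk.injEq _ _ _ _ ▸ heq).2
    rw [h1] at h2
    have hfib : ∃ Q ∈ S, Φ Q = Φ P' := ⟨P', hP', rfl⟩
    obtain ⟨hQS, _⟩ := hrepS _ hfib
    set Q := rep (Φ P')
    have hu : Qᴴ * Q = 1 := by
      obtain ⟨c, w, hw⟩ := hQS.1
      rw [hw]; exact pauliElt_adj_mul c w
    have : P * (Qᴴ * Q) = P' * (Qᴴ * Q) := by
      rw [← mul_assoc, ← mul_assoc, h2]
    rwa [hu, mul_one, mul_one] at this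
  -- counting
  have hcard : S.ncard ≤ (Finset.univ : Finset ({j // j ∈ X} → Fin 4)).card * S'.ncard := by
    rw [Set.ncard_eq_toFinset_card S hfin, Set.ncard_eq_toFinset_card S' hfin']
    have := Finset.card_le_card_of_injOn (s := hfin.toFinset)
      (f := fun P => (Φ P, P * (rep (Φ P))ᴴ))
      (t := Finset.univ ×ˢ hfin'.toFinset) ?_ ?_
    · rw [Finset.card_product] at this
      exact this
    · intro P hP
      rw [Finset.mem_coe, Set.Finite.mem_toFinset] at hP
      rw [Finset.mem_coe, Finset.mem_product]
      exact ⟨Finset.mem_univ _, (Set.Finite.mem_toFinset _).mpr (hmap P hP)⟩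
    · intro P hP P' hP' h
      exact hinj ((Set.Finite.mem_toFinset _).mp hP) ((Set.Finite.mem_toFinset _).mp hP') h
  calc S.ncard ≤ _ := hcard
  _ = 4 ^ X.card * S'.ncard := by
      congr 1
      rw [Finset.card_univ, Fintype.card_fun]
      simp [Fintype.card_coe]

lemma stab_le_clifford {n : ℕ} (ψ : QVec n) (U : QMat n) (hU : IsClifford U) :
    (stabGroup ψ).ncard ≤ (stabGroup (U.mulVec ψ)).ncard := by
  have hsub : (fun P => U * P * Uᴴ) '' stabGroup ψ ⊆ stabGroup (U.mulVec ψ) := by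
    rintro _ ⟨P, hP, rfl⟩
    constructor
    · rw [← hU.2]; exact Set.mem_image_of_mem _ hP.1
    · calc (U * P * Uᴴ).mulVec (U.mulVec ψ) = (U * P * Uᴴ * U).mulVec ψ := by
            rw [Matrix.mulVec_mulVec]
      _ = (U * P).mulVec ψ := by rw [mul_assoc (U * P), hU.1.2, mul_one]
      _ = U.mulVec (P.mulVec ψ) := by rw [Matrix.mulVec_mulVec]
      _ = U.mulVec ψ := by rw [hP.2]
  have hinj : Set.InjOn (fun P => U * P * Uᴴ) (stabGroup ψ) := by
    intro P _ P' _ h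
    simp only at h
    have h3 : ∀ Q : QMat n, Uᴴ * (U * Q * Uᴴ) * U = Q := by
      intro Q
      calc Uᴴ * (U * Q * Uᴴ) * U = (Uᴴ * U) * Q * (Uᴴ * U) := by noncomm_ring
      _ = Q := by rw [hU.1.2, one_mul, mul_one]
    have h4 : Uᴴ * (U * P * Uᴴ) * U = Uᴴ * (U * P' * Uᴴ) * U := by rw [h]
    rwa [h3, h3] at h4
  calc (stabGroup ψ).ncard = ((fun P => U * P * Uᴴ) '' stabGroup ψ).ncard :=
        (Set.ncard_image_of_injOn hinj).symm
  _ ≤ (stabGroup (U.mulVec ψ)).ncard := Set.ncard_le_ncard hsub (stab_finite _)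

def pemb : Fin 2 → Fin 4 := ![0, 3]

lemma pauli1_pemb_col0 (d : Fin 2) (c : Fin 2) :
    pauli1 (pemb d) c 0 = if c = 0 then 1 else 0 := by
  fin_cases d <;> fin_cases c <;> simp [pauli1, pemb, Matrix.one_apply]

lemma pauli1_pemb_diag (d : Fin 2) (c : Fin 2) :
    pauli1 (pemb d) c c = if d = 1 ∧ c = 1 then -1 else 1 := by
  fin_cases d <;> fin_cases c <;> simp [pauli1, pemb, Matrix.one_apply]

lemma stab_zero_state (n : ℕ) :
    2 ^ n ≤ (stabGroup (fun x : Fin n → Fin 2 => if x = (fun _ => 0) then (1 : ℂ) else 0)).ncard := by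
  classical
  set e₀ : QVec n := fun x => if x = (fun _ => 0) then (1 : ℂ) else 0 with he
  set F : (Fin n → Fin 2) → QMat n := fun b => pauliOp (fun j => pemb (b j)) with hF
  have hmem : ∀ b, F b ∈ stabGroup e₀ := by
    intro b
    constructor
    · exact ⟨0, fun j => pemb (b j), by simp [hF]⟩
    · funext x
      have : (F b).mulVec e₀ x = F b x (fun _ => 0) := by
        simp only [Matrix.mulVec, dotProduct, he]
        rw [Finset.sum_eq_single (fun _ => 0 : Fin n → Fin 2)]
        · simp
        · intro y _ hy; simp [hy]
        · intro h; exact absurd (Finset.mem_univ _) h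
      rw [this, hF]
      simp only [pauliOp]
      by_cases hx : x = fun _ => 0
      · subst hx
        simp [pauli1_pemb_col0, he]
      · obtain ⟨j, hj⟩ := Function.ne_iff.mp hx
        have : pauli1 (pemb (b j)) (x j) 0 = 0 := by
          rw [pauli1_pemb_col0, if_neg (by simpa using hj)]
        rw [Finset.prod_eq_zero (Finset.mem_univ j) this, he]
        simp [hx]
  have hinj : Function.Injective F := by
    intro b b' h
    by_contra hne
    obtain ⟨j₀, hj₀⟩ := Function.ne_iff.mp hne
    set x : Fin n → Fin 2 := fun j => if j = j₀ then 1 else 0 with hx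
    have hval : ∀ b : Fin n → Fin 2, F b x x = (if b j₀ = 1 then (-1 : ℂ) else 1) := by
      intro b
      rw [hF]
      simp only [pauliOp]
      rw [Finset.prod_eq_single j₀]
      · rw [pauli1_pemb_diag]
        by_cases hb : b j₀ = 1
        · simp [hb, hx]
        · simp [hb, hx]
      · intro j _ hj
        rw [pauli1_pemb_diag, if_neg (by simp [hx, hj])]
      · intro h; exact absurd (Finset.mem_univ _) h
    have := congrFun (congrFun h x) x
    rw [hval b, hval b'] at this
    have h2 : b j₀ = 1 ↔ b' j₀ = 1 := by
      by_cases h1 : b j₀ = 1 <;> by_cases h2 : b' j₀ = 1 <;> simp [h1, h2] at this ⊢ <;> norm_num at this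
    apply hj₀
    by_cases h1 : b j₀ = 1
    · rw [h1, h2.mp h1]
    · have hb0 : b j₀ = 0 := by omega
      have hb'0 : b' j₀ = 0 := by
        have := (not_iff_not.mpr h2).mp h1
        omega
      rw [hb0, hb'0]
  calc (2 : ℕ) ^ n = (Set.range F).ncard := by
        rw [← Set.image_univ, Set.ncard_image_of_injective _ hinj, Set.ncard_univ]
        simp [Nat.card_eq_fintype_card]
  _ ≤ (stabGroup e₀).ncard :=
      Set.ncard_le_ncard (by rintro _ ⟨b, rfl⟩; exact hmem b) (stab_finite _)

lemma pow_sub_le_of (x a b : ℕ) (hx : 1 ≤ x) (h : 2 ^ a ≤ 2 ^ b * x) : 2 ^ (a - b) ≤ x := by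
  rcases le_or_gt a b with h' | h'
  · simpa [Nat.sub_eq_zero_of_le h'] using hx
  · have heq : 2 ^ (a - b) * 2 ^ b = 2 ^ a := by
      rw [← pow_add, Nat.sub_add_cancel h'.le]
    have : 2 ^ (a - b) * 2 ^ b ≤ x * 2 ^ b := by
      rw [heq]; linarith [h]
    exact Nat.le_of_mul_le_mul_right this (Nat.pow_pos (n := b) (by norm_num))

lemma listlem {n : ℕ} (l : ℕ) : ∀ (m : ℕ) (U : Fin m → QMat n) (T : Finset (Fin m)),
    (∀ i ∉ T, IsClifford (U i)) →
    (∀ i ∈ T, ∃ X : Finset (Fin n), X.card ≤ l ∧ MatSupportedOn X (U i)) →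
    ∀ φ : QVec n,
      (stabGroup φ).ncard ≤ 4 ^ (l * T.card) * (stabGroup ((List.ofFn U).prod.mulVec φ)).ncard := by
  intro m
  induction m with
  | zero =>
    intro U T h1 h2 φ
    have hT : T = ∅ := Finset.eq_empty_of_isEmpty T
    simp [hT, List.ofFn_zero, Matrix.one_mulVec]
  | succ m ih =>
    intro U T h1 h2 φ
    set T' : Finset (Fin m) := T.preimage Fin.succ ((Fin.succ_injective m).injOn) with hT'
    have hmemT' : ∀ i : Fin m, i ∈ T' ↔ i.succ ∈ T := by
      intro i; simp [hT', Finset.mem_preimage]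
    set φ' := (List.ofFn (fun i : Fin m => U i.succ)).prod.mulVec φ with hφ'
    have hmv : (List.ofFn U).prod.mulVec φ = (U 0).mulVec φ' := by
      rw [List.ofFn_succ, List.prod_cons, hφ', Matrix.mulVec_mulVec]
    have ihh := ih (fun i => U i.succ) T'
      (fun i hi => h1 i.succ (fun hmem => hi ((hmemT' i).mpr hmem)))
      (fun i hi => h2 i.succ ((hmemT' i).mp hi)) φ
    have hTcard : T'.card ≤ T.card ∧ (0 ∈ T → T'.card + 1 ≤ T.card) := by
      have himg : T'.image Fin.succ ⊆ T := by
        intro i hi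
        obtain ⟨j, hj, rfl⟩ := Finset.mem_image.mp hi
        exact (hmemT' j).mp hj
      have hcardimg : (T'.image Fin.succ).card = T'.card :=
        Finset.card_image_of_injective _ (Fin.succ_injective m)
      constructor
      · rw [← hcardimg]; exact Finset.card_le_card himg
      · intro h0
        have hsub : insert (0 : Fin (m+1)) (T'.image Fin.succ) ⊆ T :=
          Finset.insert_subset h0 himg
        have h0n : (0 : Fin (m + 1)) ∉ T'.image Fin.succ := by
          intro hc
          obtain ⟨j, _, hj⟩ := Finset.mem_image.mp hc
          exact (Fin.succ_ne_zero j) hj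
        have hc := Finset.card_le_card hsub
        rw [Finset.card_insert_of_notMem h0n, hcardimg] at hc
        omega
    rw [hmv]
    by_cases h0 : 0 ∈ T
    · obtain ⟨X, hX, hsup⟩ := h2 0 h0
      have hkey := stab_le_mul φ' (U 0) X hsup
      calc (stabGroup φ).ncard ≤ 4 ^ (l * T'.card) * (stabGroup φ').ncard := ihh
      _ ≤ 4 ^ (l * T'.card) * (4 ^ X.card * (stabGroup ((U 0).mulVec φ')).ncard) :=
          Nat.mul_le_mul_left _ hkey
      _ = 4 ^ (l * T'.card + X.card) * (stabGroup ((U 0).mulVec φ')).ncard := by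
          rw [pow_add, mul_assoc]
      _ ≤ 4 ^ (l * T.card) * (stabGroup ((U 0).mulVec φ')).ncard := by
          apply Nat.mul_le_mul_right
          apply Nat.pow_le_pow_right (by norm_num)
          have h1' := hTcard.2 h0
          have : l * (T'.card + 1) = l * T'.card + l := by ring
          nlinarith [Nat.mul_le_mul_left l h1']
    · have hcl := stab_le_clifford φ' (U 0) (h1 0 h0)
      calc (stabGroup φ).ncard ≤ 4 ^ (l * T'.card) * (stabGroup φ').ncard := ihh
      _ ≤ 4 ^ (l * T'.card) * (stabGroup ((U 0).mulVec φ')).ncard :=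
          Nat.mul_le_mul_left _ hcl
      _ ≤ 4 ^ (l * T.card) * (stabGroup ((U 0).mulVec φ')).ncard :=
          Nat.mul_le_mul (Nat.pow_le_pow_right (by norm_num)
            (Nat.mul_le_mul_left l hTcard.1)) le_rfl

/-- (i) a unitary acting on `l` qubits shrinks the stabilizer group by a
factor of at most `2^{2l}`; (ii) in particular, a state prepared from `|0⟩^{⊗n}` by Clifford
gates together with `t` non-Clifford gates each acting on at most `l` qubits has stabilizer
nullity at most `2lt`. -/
theorem statement2 (n : ℕ) :
    (∀ (ν l : ℕ) (ψ : QVec n) (V : QMat n) (X : Finset (Fin n)),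
      IsUnitVec ψ → (stabGroup ψ).ncard = 2 ^ (n - ν) → ν ≤ n →
      IsUnitary V → X.card = l → MatSupportedOn X V →
      2 ^ (n - ν - 2 * l) ≤ (stabGroup (V.mulVec ψ)).ncard) ∧
    (∀ (t l m : ℕ) (U : Fin m → QMat n) (T : Finset (Fin m)) (ψ : QVec n),
      (∀ i, IsUnitary (U i)) →
      (∀ i ∉ T, IsClifford (U i)) →
      (∀ i ∈ T, ∃ X : Finset (Fin n), X.card ≤ l ∧ MatSupportedOn X (U i)) →
      T.card ≤ t →
      ψ = (List.ofFn U).prod.mulVec (fun x => if x = (fun _ => 0) then (1 : ℂ) else 0) →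
      2 ^ (n - 2 * l * t) ≤ (stabGroup ψ).ncard) := by
  constructor
  · intro ν l ψ V X hunit hcard hν hV hXl hsup
    have hkey := stab_le_mul ψ V X hsup
    rw [hcard, hXl] at hkey
    have h4 : (4 : ℕ) ^ l = 2 ^ (2 * l) := by
      rw [pow_mul]; norm_num
    rw [h4] at hkey
    exact pow_sub_le_of _ _ _ (one_le_stab _) hkey
  · intro t l m U T ψ _ h1 h2 hT hψ
    have hlist := listlem l m U T h1 h2
      (fun x : Fin n → Fin 2 => if x = (fun _ => 0) then (1 : ℂ) else 0)
    rw [← hψ] at hlist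
    have hbase := stab_zero_state n
    have hchain : 2 ^ n ≤ 4 ^ (l * T.card) * (stabGroup ψ).ncard := le_trans hbase hlist
    have h2' : 2 ^ n ≤ 2 ^ (2 * l * t) * (stabGroup ψ).ncard := by
      calc 2 ^ n ≤ 4 ^ (l * T.card) * (stabGroup ψ).ncard := hchain
      _ ≤ 4 ^ (l * t) * (stabGroup ψ).ncard :=
          Nat.mul_le_mul (Nat.pow_le_pow_right (by norm_num)
            (Nat.mul_le_mul_left l hT)) le_rfl
      _ = 2 ^ (2 * l * t) * (stabGroup ψ).ncard := by
          congr 1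
          rw [show (4:ℕ) = 2 ^ 2 by norm_num, ← pow_mul]
          ring_nf
    exact pow_sub_le_of _ _ _ (one_le_stab _) h2'

end
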